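/- Let 𝒞 be an arrangement of m ≥ 2 cameras with pairwise distinct centers such that no four camera centers are collinear, and let X_𝒞 := {ℓ = (ℓ_1,…,ℓ_m) ∈ Ĺ_𝒞 : ℓ_i ≠ 0 for all 1 ≤ i ≤ m}. Then X_𝒞 is Zariski dense in Ĺ_𝒞, i.e. the Zariski closure of X_𝒞 equals Ĺ_𝒞. -/

import Mathlib

open MvPolynomial
open Module Submodule Matrix

noncomputable section

abbrev Vec3 := Fin 3 → ℂ
abbrev Vec4 := Fin 4 → ℂ
abbrev Camera := Matrix (Fin 3) (Fin 4) ℂ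

/-- The polynomial ring `R = ℂ[ℓ_{i,j} : 1 ≤ i ≤ 3, 1 ≤ j ≤ m]`. -/
abbrev LineRing (m : ℕ) := MvPolynomial (Fin 3 × Fin m) ℂ

/-- `c` is (a representative of) the center of the camera `C`. -/
def IsCenter (C : Camera) (c : Vec4) : Prop := c ≠ 0 ∧ C.mulVec c = 0

/-- A camera arrangement: `m ≥ 2` cameras of rank 3 with pairwise distinct centers. -/
def IsCameraArrangement {m : ℕ} (𝒞 : Fin m → Camera) : Prop :=
  2 ≤ m ∧ (∀ i, (𝒞 i).rank = 3) ∧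
    ∀ i j : Fin m, i ≠ j → ¬ ∃ c : Vec4, IsCenter (𝒞 i) c ∧ IsCenter (𝒞 j) c

/-- The cameras indexed by `S` have collinear centers: all of their centers lie on a
common projective line in ℙ³, i.e. in a common linear subspace of dimension ≤ 2 of ℂ⁴. -/
def CollinearCenters {m : ℕ} (𝒞 : Fin m → Camera) (S : Set (Fin m)) : Prop :=
  ∃ W : Submodule ℂ Vec4, Module.finrank ℂ W ≤ 2 ∧
    ∀ i ∈ S, ∃ c : Vec4, IsCenter (𝒞 i) c ∧ c ∈ W

/-- No four camera centers are collinear. -/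
def NoFourCollinear {m : ℕ} (𝒞 : Fin m → Camera) : Prop :=
  ∀ S : Finset (Fin m), S.card = 4 → ¬ CollinearCenters 𝒞 ↑S

/-- Identify a tuple `ℓ ∈ (ℂ³)^m` with a point of the affine space `ℂ^{3m}`. -/
def flat {m : ℕ} (ℓ : Fin m → Vec3) : Fin 3 × Fin m → ℂ := fun p => ℓ p.2 p.1

/-- The ideal of all polynomials of `R` vanishing on a set `S ⊆ (ℂ³)^m`. -/
def vanishingOn {m : ℕ} (S : Set (Fin m → Vec3)) : Ideal (LineRing m) :=
  MvPolynomial.vanishingIdeal ℂ (flat '' S)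

/-- The zero locus in `(ℂ³)^m` of an ideal of `R`. -/
def zLocus {m : ℕ} (I : Ideal (LineRing m)) : Set (Fin m → Vec3) :=
  flat ⁻¹' MvPolynomial.zeroLocus ℂ I

/-- The Zariski closure of a subset of `(ℂ³)^m`. -/
def zariskiClosure {m : ℕ} (S : Set (Fin m → Vec3)) : Set (Fin m → Vec3) :=
  zLocus (vanishingOn S)

/-- The scalar 4×m matrix `M(ℓ)` whose `j`-th column is `C_jᵀ ℓ_j`. -/
def Mmat {m : ℕ} (𝒞 : Fin m → Camera) (ℓ : Fin m → Vec3) : Matrix (Fin 4) (Fin m) ℂ :=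
  Matrix.of fun r j => (𝒞 j).transpose.mulVec (ℓ j) r

/-- The cone over the line multiview variety:
`Ĺ_𝒞 = {ℓ ∈ (ℂ³)^m : rank M(ℓ) ≤ 2}`. -/
def coneLMV {m : ℕ} (𝒞 : Fin m → Camera) : Set (Fin m → Vec3) :=
  {ℓ | (Mmat 𝒞 ℓ).rank ≤ 2}

/-- From a family whose span has dimension ≥ n, extract n linearly independent members. -/
lemma aux_exists_indep {V : Type*} [AddCommGroup V] [Module ℂ V] [FiniteDimensional ℂ V]
    {ι : Type*} (v : ι → V) {n : ℕ} (h : n ≤ finrank ℂ (span ℂ (Set.range v))) :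
    ∃ f : Fin n → ι, LinearIndependent ℂ (fun i => v (f i)) := by
  obtain ⟨b, hbsub, hbspan, hbind⟩ := exists_linearIndependent ℂ (Set.range v)
  have hfin : b.Finite := hbind.setFinite
  haveI : Fintype b := hfin.fintype
  have hcard : finrank ℂ (span ℂ b) = Fintype.card b := by
    rw [finrank_span_set_eq_card hbind, Set.toFinset_card]
  have hn : n ≤ Fintype.card b := by
    rw [← hcard, hbspan]; exact h
  obtain ⟨g⟩ : Nonempty (Fin n ↪ b) := by
    rwa [Function.Embedding.nonempty_iff_card_le, Fintype.card_fin]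
  have hind : LinearIndependent ℂ (fun i : Fin n => ((g i : V))) :=
    hbind.comp g g.injective
  choose f hf using fun i : Fin n => hbsub (g i).2
  refine ⟨f, ?_⟩
  convert hind using 1
  funext i
  exact hf i

lemma cols_linearIndependent_iff_det {n : ℕ} (M : Matrix (Fin n) (Fin n) ℂ) :
    LinearIndependent ℂ Mᵀ ↔ M.det ≠ 0 := by
  constructor
  · intro h hdet
    obtain ⟨v, hv, hmv⟩ := (Matrix.exists_mulVec_eq_zero_iff).2 hdet
    apply hv
    have hz : ∑ j, v j • Mᵀ j = 0 := by
      funext i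
      have := congrFun hmv i
      simp only [Matrix.mulVec, dotProduct, Pi.zero_apply] at this
      simp only [Finset.sum_apply, Pi.smul_apply, Pi.zero_apply, smul_eq_mul,
        Matrix.transpose_apply]
      rw [← this]
      exact Finset.sum_congr rfl fun j _ => mul_comm _ _
    have := Fintype.linearIndependent_iff.1 h v hz
    funext i; exact this i
  · intro hdet
    refine Fintype.linearIndependent_iff.2 ?_
    intro g hg j
    by_contra hj
    apply hdet
    rw [← Matrix.exists_mulVec_eq_zero_iff]
    refine ⟨g, fun h0 => hj (congrFun h0 j), ?_⟩
    funext i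
    have := congrFun hg i
    simp only [Finset.sum_apply, Pi.smul_apply, smul_eq_mul, Matrix.transpose_apply,
      Pi.zero_apply] at this
    simp only [Matrix.mulVec, dotProduct, Pi.zero_apply]
    rw [← this]
    exact Finset.sum_congr rfl fun k _ => mul_comm _ _

/-- rank ≤ 2 iff all 3×3 minors vanish, for a 4×m complex matrix. -/
lemma rank_le_two_iff_minors {m : ℕ} (A : Matrix (Fin 4) (Fin m) ℂ) :
    A.rank ≤ 2 ↔ ∀ (r : Fin 3 → Fin 4) (c : Fin 3 → Fin m), (A.submatrix r c).det = 0 := by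
  constructor
  · intro h r c
    by_contra hdet
    have hind : LinearIndependent ℂ (A.submatrix r c)ᵀ :=
      (cols_linearIndependent_iff_det _).2 hdet
    have hind2 : LinearIndependent ℂ (fun j => Aᵀ (c j)) := by
      apply LinearIndependent.of_comp (LinearMap.funLeft ℂ ℂ r)
      exact hind
    have h3 : 3 ≤ A.rank := by
      rw [Matrix.rank_eq_finrank_span_cols]
      have hle : span ℂ (Set.range fun j => Aᵀ (c j)) ≤ span ℂ (Set.range Aᵀ) :=
        span_mono (Set.range_comp_subset_range c Aᵀ)
      have := Submodule.finrank_mono hle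
      rw [finrank_span_eq_card hind2, Fintype.card_fin] at this
      exact this
    omega
  · intro h
    by_contra hrank
    push_neg at hrank
    have h3 : 3 ≤ finrank ℂ (span ℂ (Set.range Aᵀ)) := by
      show 3 ≤ finrank ℂ (span ℂ (Set.range A.col))
      rw [← Matrix.rank_eq_finrank_span_cols]; omega
    obtain ⟨c, hc⟩ := aux_exists_indep Aᵀ h3
    set B : Matrix (Fin 4) (Fin 3) ℂ := A.submatrix id c with hB
    have hBcols : LinearIndependent ℂ Bᵀ := by
      exact hc
    have hrankB : B.rank = 3 := by
      rw [Matrix.rank_eq_finrank_span_cols]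
      show finrank ℂ (span ℂ (Set.range Bᵀ)) = 3
      rw [finrank_span_eq_card hBcols, Fintype.card_fin]
    have hrankBT : Bᵀ.rank = 3 := by rw [Matrix.rank_transpose]; exact hrankB
    have h3' : 3 ≤ finrank ℂ (span ℂ (Set.range B)) := by
      have : Bᵀ.rank = finrank ℂ (span ℂ (Set.range B)) := by
        rw [Matrix.rank_eq_finrank_span_cols]; rfl
      omega
    obtain ⟨r, hr⟩ := aux_exists_indep B h3'
    apply (cols_linearIndependent_iff_det (A.submatrix r c)ᵀ).1 ?_ ?_
    · rw [Matrix.transpose_transpose]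
      exact hr
    · rw [Matrix.det_transpose]; exact h r c

/-- Any subspace of `ℂ⁴` of dimension ≤ 2 extends to one of dimension exactly 2. -/
lemma exists_superset_finrank_two (V : Submodule ℂ Vec4) (h : finrank ℂ V ≤ 2) :
    ∃ W : Submodule ℂ Vec4, V ≤ W ∧ finrank ℂ W = 2 := by
  obtain ⟨n, hn⟩ : ∃ n, finrank ℂ V + n = 2 := ⟨2 - finrank ℂ V, by omega⟩
  clear h
  induction n generalizing V with
  | zero => exact ⟨V, le_refl V, by omega⟩
  | succ n ih =>
    have hV4 : finrank ℂ V < 4 := by omega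
    have hne : ∃ x : Vec4, x ∉ V := by
      by_contra hx
      push_neg at hx
      have : V = ⊤ := Submodule.eq_top_iff'.2 hx
      rw [this, finrank_top] at hV4
      have : finrank ℂ Vec4 = 4 := Module.finrank_fin_fun ℂ
      omega
    obtain ⟨x, hx⟩ := hne
    have hx0 : x ≠ 0 := fun h0 => hx (h0 ▸ V.zero_mem)
    have hdisj : V ⊓ (ℂ ∙ x) = ⊥ := by
      rw [← disjoint_iff]
      exact (Submodule.disjoint_span_singleton' hx0).2 hx
    have hsum := Submodule.finrank_sup_add_finrank_inf_eq V (ℂ ∙ x)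
    rw [hdisj, finrank_bot, finrank_span_singleton hx0] at hsum
    have hfr : finrank ℂ ↥(V ⊔ (ℂ ∙ x)) = finrank ℂ V + 1 := by omega
    obtain ⟨W, hW1, hW2⟩ := ih (V ⊔ (ℂ ∙ x)) (by omega)
    exact ⟨W, le_trans le_sup_left hW1, hW2⟩

/-- The matrix of linear forms whose evaluation at `flat ℓ` is `Mmat 𝒞 ℓ`. -/
def Mpoly {m : ℕ} (𝒞 : Fin m → Camera) : Matrix (Fin 4) (Fin m) (LineRing m) :=
  Matrix.of fun r j => ∑ k : Fin 3, MvPolynomial.C (𝒞 j k r) * MvPolynomial.X (k, j)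

lemma eval_Mpoly {m : ℕ} (𝒞 : Fin m → Camera) (ℓ : Fin m → Vec3) :
    (Mpoly 𝒞).map (MvPolynomial.eval (flat ℓ)) = Mmat 𝒞 ℓ := by
  ext r j
  simp [Mpoly, Mmat, Matrix.mulVec, dotProduct, flat, Matrix.transpose_apply]

/-- The columns of `Mmat`. -/
lemma Mmat_col {m : ℕ} (𝒞 : Fin m → Camera) (ℓ : Fin m → Vec3) (j : Fin m) :
    (Mmat 𝒞 ℓ)ᵀ j = (𝒞 j)ᵀ *ᵥ (ℓ j) := rfl

/-- **Lemma 2.2 (1).** If no four cameras are collinear, the set `X_𝒞` of points of the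
cone `Ĺ_𝒞` all of whose components are nonzero is Zariski dense in `Ĺ_𝒞`. -/
theorem zariskiClosure_nonzeroPart_cone {m : ℕ} (𝒞 : Fin m → Camera)
    (harr : IsCameraArrangement 𝒞) (h4 : NoFourCollinear 𝒞) :
    zariskiClosure {ℓ | ℓ ∈ coneLMV 𝒞 ∧ ∀ i, ℓ i ≠ 0} = coneLMV 𝒞 := by
  set X : Set (Fin m → Vec3) := {ℓ | ℓ ∈ coneLMV 𝒞 ∧ ∀ i, ℓ i ≠ 0} with hX
  apply Set.Subset.antisymm
  · -- closure ⊆ cone, via minors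
    intro ℓ hℓ
    have hz : ∀ f ∈ vanishingOn X, MvPolynomial.eval (flat ℓ) f = 0 := fun f hf => (MvPolynomial.mem_zeroLocus_iff.1 hℓ) f hf
    show (Mmat 𝒞 ℓ).rank ≤ 2
    rw [rank_le_two_iff_minors]
    intro r c
    have hmem : ((Mpoly 𝒞).submatrix r c).det ∈ vanishingOn X := by
      rw [vanishingOn, MvPolynomial.mem_vanishingIdeal_iff]
      rintro x ⟨ℓ', hℓ', rfl⟩
      show MvPolynomial.eval (flat ℓ') _ = 0
      have hdet := (MvPolynomial.eval (flat ℓ')).map_det ((Mpoly 𝒞).submatrix r c)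
      rw [hdet, RingHom.mapMatrix_apply]
      have : ((Mpoly 𝒞).submatrix r c).map (MvPolynomial.eval (flat ℓ'))
          = (Mmat 𝒞 ℓ').submatrix r c := by
        rw [← eval_Mpoly 𝒞 ℓ']; rfl
      rw [this]
      exact (rank_le_two_iff_minors _).1 hℓ'.1 r c
    have := hz _ hmem
    rw [(MvPolynomial.eval (flat ℓ)).map_det, RingHom.mapMatrix_apply] at this
    rw [show ((Mpoly 𝒞).submatrix r c).map (MvPolynomial.eval (flat ℓ))
        = (Mmat 𝒞 ℓ).submatrix r c from by rw [← eval_Mpoly 𝒞 ℓ]; rfl] at this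
    exact this
  · -- cone ⊆ closure, via perturbation
    intro ℓ hℓ
    show ∀ f ∈ vanishingOn X, MvPolynomial.eval (flat ℓ) f = 0
    intro f hf
    -- set up the perturbation direction
    have hV : finrank ℂ (span ℂ (Set.range (Mmat 𝒞 ℓ)ᵀ)) ≤ 2 := by
      show finrank ℂ (span ℂ (Set.range (Mmat 𝒞 ℓ).col)) ≤ 2
      rw [← Matrix.rank_eq_finrank_span_cols]; exact hℓ
    obtain ⟨W, hVW, hW2⟩ := exists_superset_finrank_two _ hV
    have hu : ∀ j : Fin m, ∃ u : Vec3, u ≠ 0 ∧ (𝒞 j)ᵀ *ᵥ u ∈ W := by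
      intro j
      set U : Submodule ℂ Vec4 := LinearMap.range ((𝒞 j)ᵀ).mulVecLin with hU
      have hU3 : finrank ℂ U = 3 := by
        have : ((𝒞 j)ᵀ).rank = 3 := by rw [Matrix.rank_transpose]; exact harr.2.1 j
        exact this
      have hsum := Submodule.finrank_sup_add_finrank_inf_eq W U
      have hle4 : finrank ℂ ↥(W ⊔ U) ≤ 4 := by
        have h1 := Submodule.finrank_le (W ⊔ U)
        have h2 : finrank ℂ Vec4 = 4 := Module.finrank_fin_fun ℂ
        omega
      have hpos : finrank ℂ ↥(W ⊓ U) ≠ 0 := by omega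
      have hbot : W ⊓ U ≠ ⊥ := by
        intro h
        rw [h, finrank_bot] at hpos
        exact hpos rfl
      obtain ⟨w, hw, hw0⟩ := Submodule.exists_mem_ne_zero_of_ne_bot hbot
      obtain ⟨u, hu⟩ := hw.2
      refine ⟨u, ?_, ?_⟩
      · intro h0
        apply hw0
        rw [← hu, h0]
        simp
      · rw [show (𝒞 j)ᵀ *ᵥ u = w from hu]
        exact hw.1
    choose u hu0 huW using hu
    -- the bad set of parameters
    set T : Set ℂ := ⋃ j : Fin m, {t : ℂ | ℓ j + t • u j = 0} with hT
    have hTfin : T.Finite := by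
      apply Set.finite_iUnion
      intro j
      apply Set.Subsingleton.finite
      intro t1 h1 t2 h2
      have he : t1 • u j = t2 • u j := by
        have a1 : t1 • u j = -(ℓ j) := eq_neg_of_add_eq_zero_right h1
        have a2 : t2 • u j = -(ℓ j) := eq_neg_of_add_eq_zero_right h2
        rw [a1, a2]
      exact smul_left_injective ℂ (hu0 j) he
    -- perturbed points lie in X
    have hXt : ∀ t ∉ T, (fun j => ℓ j + t • u j) ∈ X := by
      intro t ht
      constructor
      · show (Mmat 𝒞 fun j => ℓ j + t • u j).rank ≤ 2
        rw [Matrix.rank_eq_finrank_span_cols]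
        have hsub : Set.range (Mmat 𝒞 fun j => ℓ j + t • u j)ᵀ ⊆ (W : Set Vec4) := by
          rintro _ ⟨j, rfl⟩
          rw [Mmat_col]
          have : (𝒞 j)ᵀ *ᵥ (ℓ j + t • u j) = (𝒞 j)ᵀ *ᵥ ℓ j + t • ((𝒞 j)ᵀ *ᵥ u j) := by
            rw [Matrix.mulVec_add, Matrix.mulVec_smul]
          rw [this]
          exact W.add_mem (hVW (subset_span ⟨j, (Mmat_col 𝒞 ℓ j).symm⟩))
            (W.smul_mem t (huW j))
        have hle : span ℂ (Set.range (Mmat 𝒞 fun j => ℓ j + t • u j)ᵀ) ≤ W := span_le.2 hsub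
        calc finrank ℂ ↥(span ℂ (Set.range (Mmat 𝒞 fun j => ℓ j + t • u j)ᵀ))
            ≤ finrank ℂ W := Submodule.finrank_mono hle
          _ = 2 := hW2
      · intro j hj
        exact ht (Set.mem_iUnion.2 ⟨j, hj⟩)
    -- the polynomial in t
    set g : Fin 3 × Fin m → Polynomial ℂ :=
      fun p => Polynomial.C (flat ℓ p) + Polynomial.X * Polynomial.C (flat u p) with hg
    set P : Polynomial ℂ := MvPolynomial.eval₂ (Polynomial.C : ℂ →+* Polynomial ℂ) g f with hP
    have hPt : ∀ t : ℂ, Polynomial.eval t P =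
        MvPolynomial.eval (fun p => flat ℓ p + t * flat u p) f := by
      intro t
      have hcomp := MvPolynomial.eval₂_comp_left (Polynomial.evalRingHom t)
        (Polynomial.C : ℂ →+* Polynomial ℂ) g f
      have h1 : (Polynomial.evalRingHom t).comp (Polynomial.C : ℂ →+* Polynomial ℂ)
          = RingHom.id ℂ := by
        ext r; simp
      have h2 : (Polynomial.evalRingHom t) ∘ g = fun p => flat ℓ p + t * flat u p := by
        funext p
        simp only [hg, Function.comp_apply, Polynomial.coe_evalRingHom, Polynomial.eval_add,
          Polynomial.eval_mul, Polynomial.eval_C, Polynomial.eval_X]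
      rw [h1, h2] at hcomp
      rw [show Polynomial.eval t P = (Polynomial.evalRingHom t) P from rfl, hP, hcomp]
      rfl
    have hroots : ∀ t ∉ T, Polynomial.eval t P = 0 := by
      intro t ht
      rw [hPt t]
      have hfl : (fun p => flat ℓ p + t * flat u p) = flat (fun j => ℓ j + t • u j) := by
        funext p
        simp [flat, Pi.smul_apply, smul_eq_mul]
      rw [hfl]
      exact (MvPolynomial.mem_vanishingIdeal_iff.1 hf) _ ⟨_, hXt t ht, rfl⟩
    have hP0 : P = 0 := by
      apply Polynomial.eq_zero_of_infinite_isRoot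
      apply Set.Infinite.mono _ (hTfin.infinite_compl)
      intro t ht
      exact hroots t ht
    have := hPt 0
    rw [hP0] at this
    simp only [Polynomial.eval_zero] at this
    rw [show (fun p => flat ℓ p + 0 * flat u p) = flat ℓ from by funext p; ring] at this
    exact this.symm

end
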